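/- Let N ≥ 1, let β, c : Fin N → ℝ satisfy β n > 0 for all n, let P ∈ ℝ with P + Σ_{i} c i / β i > 0, and let γ : Fin N → ℝ. Define P̄ n := P/N − c n / β n + (1/N) Σ_{i} c i / β i, and let C := { Q : Fin N → ℝ | Σ_n Q n = P and β n · Q n + c n ≥ 2^{γ n} for all n }. Suppose Q* ∈ C maximizes Σ_n log₂(β n · Q n + c n) over C. Then for every index n such that the unconstrained optimum violates the QoS constraint, i.e. β n · P̄ n + c n < 2^{γ n}, the constraint is active at the optimum: β n · Q* n + c n = 2^{γ n}, equivalently Q* n = (2^{γ n} − c n)/β n. -/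

import Mathlib

set_option maxHeartbeats 1000000 in
/-- Theorem 2 of the paper: in the QoS-constrained group power allocation
problem, any global maximizer `Q*` satisfies with equality the rate constraint
of every group whose constraint is violated by the unconstrained water-filling
solution `P̄`. -/
theorem stmt_2 (N : ℕ) (hN : 1 ≤ N) (β c : Fin N → ℝ) (hβ : ∀ n, 0 < β n)
    (P : ℝ) (hP : 0 < P + ∑ i, c i / β i) (γ : Fin N → ℝ)
    (Pbar : Fin N → ℝ)
    (hPbar : ∀ n, Pbar n = P / (N : ℝ) - c n / β n + (1 / (N : ℝ)) * ∑ i, c i / β i)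
    (C : Set (Fin N → ℝ))
    (hC : C = {Q : Fin N → ℝ |
      (∑ n, Q n = P) ∧ ∀ n, (2 : ℝ) ^ (γ n) ≤ β n * Q n + c n})
    (Qstar : Fin N → ℝ) (hQstar : Qstar ∈ C)
    (hmax : ∀ Q ∈ C, ∑ n, Real.logb 2 (β n * Q n + c n) ≤
      ∑ n, Real.logb 2 (β n * Qstar n + c n)) :
    ∀ n, β n * Pbar n + c n < (2 : ℝ) ^ (γ n) →
      β n * Qstar n + c n = (2 : ℝ) ^ (γ n) ∧
      Qstar n = ((2 : ℝ) ^ (γ n) - c n) / β n := by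
  intro n hn
  rw [hC] at hQstar
  obtain ⟨hsum, hcon⟩ := hQstar
  have hβn := hβ n
  have hmain : β n * Qstar n + c n = (2 : ℝ) ^ (γ n) := by
    by_contra hne
    have hstrict : (2 : ℝ) ^ (γ n) < β n * Qstar n + c n := lt_of_le_of_ne (hcon n) (Ne.symm hne)
    -- notation
    set S : ℝ := P + ∑ i, c i / β i with hS
    set x : Fin N → ℝ := fun i => Qstar i + c i / β i with hx
    clear_value S
    clear_value x
    have hNpos : (0 : ℝ) < (N : ℝ) := by exact_mod_cast Nat.lt_of_lt_of_le Nat.zero_lt_one hN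
    have hNne : (N : ℝ) ≠ 0 := ne_of_gt hNpos
    -- Pbar n rewriting
    have hPbarn : β n * Pbar n + c n = β n * (S / N) := by
      rw [hPbar n]
      field_simp [hS]
      rw [hS]; simp only [div_eq_mul_inv]; ring
    -- x n > S / N
    have hxn : S / (N : ℝ) < x n := by
      have h1 : β n * (S / N) < β n * Qstar n + c n := by rw [← hPbarn]; linarith
      have h2 : β n * x n = β n * Qstar n + c n := by
        simp only [hx]; field_simp
      have h3 : β n * (S / N) < β n * x n := by rw [h2]; exact h1
      exact lt_of_mul_lt_mul_left h3 hβn.le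
    -- sum of x
    have hsumx : ∑ i, x i = S := by
      simp only [hx, Finset.sum_add_distrib, hsum, hS]
    -- find m with x m < S / N
    have hsplit : ∑ i ∈ Finset.univ.erase n, x i + x n = ∑ i, x i :=
      Finset.sum_erase_add _ _ (Finset.mem_univ n)
    have hcard : ((Finset.univ.erase n).card : ℝ) = (N : ℝ) - 1 := by
      rw [Finset.card_erase_of_mem (Finset.mem_univ n)]
      simp [Nat.cast_sub hN]
    have hlt : ∑ i ∈ Finset.univ.erase n, x i <
        ∑ _i ∈ Finset.univ.erase n, (S / (N : ℝ)) := by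
      rw [Finset.sum_const, nsmul_eq_mul]
      have : ∑ i ∈ Finset.univ.erase n, x i = S - x n := by linarith [hsplit, hsumx]
      rw [this]
      have : ((Finset.univ.erase n).card : ℝ) * (S / N) = S - S / N := by
        rw [hcard]; field_simp
      rw [this]
      linarith
    obtain ⟨m, hmmem, hxm⟩ := Finset.exists_lt_of_sum_lt hlt
    have hmn : m ≠ n := Finset.ne_of_mem_erase hmmem
    have hβm := hβ m
    -- the perturbation
    set δ : ℝ := min ((β n * Qstar n + c n - (2 : ℝ) ^ (γ n)) / β n) ((x n - x m) / 2) with hδ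
    have hδpos : 0 < δ := by
      apply lt_min
      · apply div_pos (by linarith) hβn
      · linarith
    have hδ1 : β n * δ ≤ β n * Qstar n + c n - (2 : ℝ) ^ (γ n) := by
      have := min_le_left ((β n * Qstar n + c n - (2 : ℝ) ^ (γ n)) / β n) ((x n - x m) / 2)
      calc β n * δ ≤ β n * ((β n * Qstar n + c n - (2 : ℝ) ^ (γ n)) / β n) := by
            exact mul_le_mul_of_nonneg_left this (le_of_lt hβn)
        _ = β n * Qstar n + c n - (2 : ℝ) ^ (γ n) := by field_simp
    have hδ2 : δ ≤ (x n - x m) / 2 := min_le_right _ _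
    clear_value δ
    set Q' : Fin N → ℝ := fun i =>
      Qstar i + (if i = n then -δ else 0) + (if i = m then δ else 0) with hQ'
    have hQ'n : Q' n = Qstar n - δ := by
      simp [hQ', Ne.symm hmn, sub_eq_add_neg]
    have hQ'm : Q' m = Qstar m + δ := by
      simp [hQ', hmn]
    have hQ'other : ∀ i, i ≠ n → i ≠ m → Q' i = Qstar i := by
      intro i h1 h2; simp [hQ', h1, h2]
    clear_value Q'
    have hQ'mem : Q' ∈ C := by
      rw [hC]
      constructor
      · simp only [hQ', Finset.sum_add_distrib, hsum]
        rw [Finset.sum_ite_eq' Finset.univ n (fun _ => -δ),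
          Finset.sum_ite_eq' Finset.univ m (fun _ => δ)]
        simp
      · intro i
        rcases eq_or_ne i n with rfl | hin
        · rw [hQ'n]; nlinarith
        · rcases eq_or_ne i m with rfl | him
          · rw [hQ'm]
            have := hcon i
            nlinarith [hβ i]
          · rw [hQ'other i hin him]; exact hcon i
    -- positivity
    have hpow : ∀ i, (0 : ℝ) < (2 : ℝ) ^ (γ i) := fun i => Real.rpow_pos_of_pos (by norm_num) _
    have hapos : ∀ i, 0 < β i * Qstar i + c i := fun i => lt_of_lt_of_le (hpow i) (hcon i)
    -- sum decomposition
    have hmm : m ∈ Finset.univ.erase n := hmmem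
    have e1 : ∀ g : Fin N → ℝ, ∑ i, g i =
        ∑ i ∈ (Finset.univ.erase n).erase m, g i + g m + g n := by
      intro g
      rw [← Finset.sum_erase_add Finset.univ g (Finset.mem_univ n),
        ← Finset.sum_erase_add (Finset.univ.erase n) g hmm]
    set f : Fin N → ℝ := fun i => Real.logb 2 (β i * Qstar i + c i) with hf
    set f' : Fin N → ℝ := fun i => Real.logb 2 (β i * Q' i + c i) with hf'
    have hrest : ∑ i ∈ (Finset.univ.erase n).erase m, f' i =
        ∑ i ∈ (Finset.univ.erase n).erase m, f i := by
      apply Finset.sum_congr rfl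
      intro i hi
      have h1 : i ≠ m := Finset.ne_of_mem_erase hi
      have h2 : i ≠ n := Finset.ne_of_mem_erase (Finset.mem_of_mem_erase hi)
      simp only [hf', hf, hQ'other i h2 h1]
    -- key strict inequality
    have hxrel_n : β n * x n = β n * Qstar n + c n := by simp only [hx]; field_simp
    have hxrel_m : β m * x m = β m * Qstar m + c m := by simp only [hx]; field_simp
    have hA'pos : 0 < β n * Q' n + c n := by rw [hQ'n]; nlinarith [hpow n]
    have hB'pos : 0 < β m * Q' m + c m := by rw [hQ'm]; nlinarith [hapos m]
    have hprod : (β n * Qstar n + c n) * (β m * Qstar m + c m) <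
        (β n * Q' n + c n) * (β m * Q' m + c m) := by
      rw [hQ'n, hQ'm]
      have key : (β n * (Qstar n - δ) + c n) * (β m * (Qstar m + δ) + c m)
          - (β n * Qstar n + c n) * (β m * Qstar m + c m)
          = β n * β m * δ * (x n - x m - δ) := by
        linear_combination (-(δ * β m)) * hxrel_n + (δ * β n) * hxrel_m
      have e4 : 0 < β n * β m * δ * (x n - x m - δ) :=
        mul_pos (mul_pos (mul_pos hβn hβm) hδpos) (by linarith)
      linarith [key, e4]
    have hkey : f n + f m < f' n + f' m := by
      simp only [hf, hf']
      rw [← Real.logb_mul (ne_of_gt (hapos n)) (ne_of_gt (hapos m)),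
        ← Real.logb_mul (ne_of_gt hA'pos) (ne_of_gt hB'pos)]
      exact Real.logb_lt_logb (by norm_num) (mul_pos (hapos n) (hapos m)) hprod
    have hgt : ∑ i, f i < ∑ i, f' i := by
      rw [e1 f, e1 f', hrest]
      linarith
    have := hmax Q' hQ'mem
    simp only [← hf, ← hf'] at this
    linarith
  refine ⟨hmain, ?_⟩
  field_simp
  linarith
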